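/- Let Ω ⊂ ℝ² be a bounded radially symmetric domain, let u be a k-invariant classical solution of −Δu = f(|x|,u) in Ω with u = 0 on ∂Ω, and suppose f(|x|,s) is convex in the variable s. Then for every unit vector e, the function w_e(x) = u(σ_e(x)) − u(x) satisfies the differential inequality −Δw_e − f'(|x|,u)w_e ≥ 0 in S_{k,e}^+ and vanishes on ∂S_{k,e}^+. -/

import Mathlib

open Complex MeasureTheory Real Set

noncomputable section

/-- The Laplacian of `u : ℂ → ℝ` (ℂ regarded as the Euclidean plane). -/
def lap (u : ℂ → ℝ) (z : ℂ) : ℝ :=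
  fderiv ℝ (fun w => fderiv ℝ u w 1) z 1 +
    fderiv ℝ (fun w => fderiv ℝ u w Complex.I) z Complex.I

/-- Rotation of the plane by angle `α` about the origin. -/
def rot (α : ℝ) (z : ℂ) : ℂ := Complex.exp ((α : ℂ) * Complex.I) * z

/-- Reflection of the plane across the line `r_ψ` through the origin with direction
`(cos ψ, sin ψ)`. -/
def reflect (ψ : ℝ) (z : ℂ) : ℂ := Complex.exp (((2 * ψ : ℝ) : ℂ) * Complex.I) * (starRingEnd ℂ) z

/-- A function is `k`-invariant on `Ω` if it is invariant under the rotation of angle `2π/k`. -/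
def kInvariant (Ω : Set ℂ) (k : ℕ) (u : ℂ → ℝ) : Prop :=
  ∀ z ∈ Ω, u (rot (2 * Real.pi / k) z) = u z

/-- The open circular sector of `Ω` of polar angles strictly between `a` and `b`. -/
def sector (Ω : Set ℂ) (a b : ℝ) : Set ℂ :=
  {z | z ∈ Ω ∧ ∃ r θ : ℝ, 0 < r ∧ a < θ ∧ θ < b ∧ z = (r : ℂ) * Complex.exp ((θ : ℂ) * Complex.I)}

/-- The sector `S_{2k,e}` of angular width `2π/k` with symmetry axis `r_ψ`. -/
def S2k (Ω : Set ℂ) (k : ℕ) (ψ : ℝ) : Set ℂ := sector Ω (ψ - Real.pi / k) (ψ + Real.pi / k)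

/-- The half-sector `S_{k,e}^+`. -/
def Splus (Ω : Set ℂ) (k : ℕ) (ψ : ℝ) : Set ℂ := sector Ω ψ (ψ + Real.pi / k)

/-- The half-sector `S_{k,e}^-`. -/
def Sminus (Ω : Set ℂ) (k : ℕ) (ψ : ℝ) : Set ℂ := sector Ω (ψ - Real.pi / k) ψ

/-- `w_e(x) = u(σ_e x) - u x`. -/
def wfun (u : ℂ → ℝ) (ψ : ℝ) (z : ℂ) : ℝ := u (reflect ψ z) - u z

/-- Angular derivative of `u` at `z`. -/
def uTheta (u : ℂ → ℝ) (z : ℂ) : ℝ := deriv (fun t : ℝ => u (rot t z)) 0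

/-- `u` is a radial function on `Ω`. -/
def IsRadial (Ω : Set ℂ) (u : ℂ → ℝ) : Prop :=
  ∀ z ∈ Ω, ∀ z' ∈ Ω, ‖z‖ = ‖z'‖ → u z = u z'

/-- `u` is strictly monotone in the angular variable on `D`. -/
def StrictAngularMono (u : ℂ → ℝ) (D : Set ℂ) : Prop :=
  (∀ z ∈ D, 0 < uTheta u z) ∨ (∀ z ∈ D, uTheta u z < 0)

/-- `C¹` functions with compact support contained in `D`. -/
def C10 (D : Set ℂ) : Set (ℂ → ℝ) :=
  {φ | ContDiff ℝ 1 φ ∧ HasCompactSupport φ ∧ tsupport φ ⊆ D}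

/-- The quadratic form `∫_D (|∇v|² - c v²)`. -/
def Qform (c : ℂ → ℝ) (D : Set ℂ) (v : ℂ → ℝ) : ℝ :=
  ∫ z in D, (‖fderiv ℝ v z‖ ^ 2 - c z * v z ^ 2)

/-- First Dirichlet eigenvalue of `-Δ - c` on `D`, as the Rayleigh infimum. -/
def lambda1 (c : ℂ → ℝ) (D : Set ℂ) : ℝ :=
  sInf {μ | ∃ φ ∈ C10 D, (∫ z in D, φ z ^ 2) = 1 ∧ μ = Qform c D φ}

/-- Potential of the linearized operator `L_u = -Δ - f'(|x|, u)`. -/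
def linCoeff (f' : ℝ → ℝ → ℝ) (u : ℂ → ℝ) (z : ℂ) : ℝ := f' (‖z‖) (u z)

/-- The `k`-invariant Morse index of the linearized operator is at most `m`: every subspace
of `k`-invariant functions of `C¹_0(Ω)` on which the quadratic form is negative definite has
dimension at most `m`. -/
def MorseIndexLE (Ω : Set ℂ) (k : ℕ) (c : ℂ → ℝ) (m : ℕ) : Prop :=
  ∀ V : Submodule ℝ (ℂ → ℝ),
    (∀ v ∈ V, v ∈ C10 Ω ∧ ∀ z ∈ Ω, v (rot (2 * Real.pi / k) z) = v z) →
    (∀ v ∈ V, v ≠ 0 → Qform c Ω v < 0) →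
    Module.rank ℝ ↥V ≤ (m : Cardinal)

/-- A bounded radially symmetric planar domain: a ball or an annulus centered at the origin. -/
def BoundedRadialDomain (Ω : Set ℂ) : Prop :=
  (∃ R : ℝ, 0 < R ∧ Ω = Metric.ball (0 : ℂ) R) ∨
    (∃ r R : ℝ, 0 < r ∧ r < R ∧ Ω = {z : ℂ | r < ‖z‖ ∧ ‖z‖ < R})

/-- An unbounded radially symmetric planar domain: the plane or the exterior of a closed ball. -/
def UnboundedRadialDomain (Ω : Set ℂ) : Prop :=
  Ω = Set.univ ∨ ∃ R : ℝ, 0 < R ∧ Ω = {z : ℂ | R < ‖z‖}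

/-- `u` is a classical solution of `-Δu = f(|x|,u)` in `Ω` with `u = 0` on `∂Ω`, where
`f'` is the derivative of `f` with respect to the second variable. -/
structure IsSolution (Ω : Set ℂ) (f f' : ℝ → ℝ → ℝ) (u : ℂ → ℝ) : Prop where
  smooth : ContDiffOn ℝ 2 u Ω
  cont : ContinuousOn u (closure Ω)
  pde : ∀ z ∈ Ω, -lap u z = f (‖z‖) (u z)
  bc : ∀ z ∈ frontier Ω, u z = 0
  hasDeriv : ∀ r s : ℝ, HasDerivAt (fun t => f r t) (f' r s) s
  f_cont : Continuous fun p : ℝ × ℝ => f p.1 p.2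
  f'_cont : Continuous fun p : ℝ × ℝ => f' p.1 p.2




/-! ### Auxiliary material for `statement14` -/

section Statement14Aux

/-- `e^{it}` as a function of a real `t`. -/
noncomputable def Efn (t : ℝ) : ℂ := Complex.exp ((t : ℂ) * Complex.I)

lemma Efn_mul (s t : ℝ) : Efn s * Efn t = Efn (s + t) := by
  simp [Efn, ← Complex.exp_add, Complex.ofReal_add, add_mul]

lemma Efn_abs (t : ℝ) : ‖Efn t‖ = 1 := Complex.norm_exp_ofReal_mul_I t

lemma Efn_ne_zero (t : ℝ) : Efn t ≠ 0 := Complex.exp_ne_zero _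

lemma Efn_zero : Efn 0 = 1 := by simp [Efn]

lemma Efn_re (t : ℝ) : (Efn t).re = Real.cos t := by
  rw [Efn, Complex.exp_mul_I]; simp [← Complex.ofReal_cos, ← Complex.ofReal_sin]

lemma Efn_im (t : ℝ) : (Efn t).im = Real.sin t := by
  rw [Efn, Complex.exp_mul_I]; simp [← Complex.ofReal_cos, ← Complex.ofReal_sin]

lemma Efn_conj (t : ℝ) : (starRingEnd ℂ) (Efn t) = Efn (-t) := by
  rw [Efn, Efn, ← Complex.exp_conj]; simp

lemma Efn_cos_sin (t : ℝ) : Efn t = (Real.cos t : ℂ) + (Real.sin t : ℂ) * Complex.I := by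
  rw [Efn, Complex.exp_mul_I]; simp [Complex.ofReal_cos, Complex.ofReal_sin]

lemma reflect_def (ψ : ℝ) (z : ℂ) : reflect ψ z = Efn (2 * ψ) * (starRingEnd ℂ) z := rfl

lemma rot_def (α : ℝ) (z : ℂ) : rot α z = Efn α * z := rfl

lemma reflect_abs (ψ : ℝ) (z : ℂ) : ‖reflect ψ z‖ = ‖z‖ := by
  rw [reflect_def, norm_mul, Efn_abs, one_mul, Complex.norm_conj]

lemma reflect_coe (ψ r θ : ℝ) : reflect ψ ((r : ℂ) * Efn θ) = (r : ℂ) * Efn (2 * ψ - θ) := by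
  rw [reflect_def, map_mul, Complex.conj_ofReal, Efn_conj, mul_left_comm, Efn_mul]
  have h : 2 * ψ + -θ = 2 * ψ - θ := by ring
  rw [h]

lemma reflect_reflect (ψ : ℝ) (z : ℂ) : reflect ψ (reflect ψ z) = z := by
  rw [reflect_def, reflect_def, map_mul, Efn_conj, Complex.conj_conj, ← mul_assoc, Efn_mul]
  have h : 2 * ψ + -(2 * ψ) = 0 := by ring
  rw [h, Efn_zero, one_mul]

lemma reflect_zero (ψ : ℝ) : reflect ψ 0 = 0 := by
  rw [reflect_def, map_zero, mul_zero]

/-- `reflect ψ` as a continuous `ℝ`-linear map. -/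
noncomputable def reflectL (ψ : ℝ) : ℂ →L[ℝ] ℂ :=
  (((ContinuousLinearMap.mul ℂ ℂ) (Efn (2 * ψ))).restrictScalars ℝ).comp
    (Complex.conjCLE : ℂ ≃L[ℝ] ℂ).toContinuousLinearMap

lemma reflectL_coe (ψ : ℝ) : ⇑(reflectL ψ) = reflect ψ := rfl

/-- `reflect ψ` as a homeomorphism. -/
noncomputable def reflectHomeo (ψ : ℝ) : ℂ ≃ₜ ℂ :=
  { toEquiv := ⟨reflect ψ, reflect ψ, reflect_reflect ψ, reflect_reflect ψ⟩,
    continuous_toFun := (reflectL ψ).continuous,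
    continuous_invFun := (reflectL ψ).continuous }

lemma radial_mem {Ω : Set ℂ} (hΩ : BoundedRadialDomain Ω) {z z' : ℂ}
    (h : ‖z'‖ = ‖z‖) (hz : z ∈ Ω) : z' ∈ Ω := by
  rcases hΩ with ⟨R, hR, rfl⟩ | ⟨r, R, hr, hrR, rfl⟩
  · simp only [Metric.mem_ball, Complex.dist_eq, sub_zero] at hz ⊢; rwa [h]
  · simp only [Set.mem_setOf_eq] at hz ⊢; rwa [h]

lemma radial_open {Ω : Set ℂ} (hΩ : BoundedRadialDomain Ω) : IsOpen Ω := by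
  rcases hΩ with ⟨R, hR, rfl⟩ | ⟨r, R, hr, hrR, rfl⟩
  · exact Metric.isOpen_ball
  · exact (isOpen_lt continuous_const continuous_norm).inter
      (isOpen_lt continuous_norm continuous_const)

/-- Open circular cone around direction `μ` of half-width `δ`. -/
def coneLt (μ δ : ℝ) : Set ℂ :=
  {z | z ≠ 0 ∧ Real.cos δ * ‖z‖ < (Efn (-μ) * z).re}

/-- Closed version of the cone condition. -/
def coneLe (μ δ : ℝ) : Set ℂ :=
  {z | Real.cos δ * ‖z‖ ≤ (Efn (-μ) * z).re}

lemma coneLt_isOpen (μ δ : ℝ) : IsOpen (coneLt μ δ) := by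
  have h1 : IsOpen {z : ℂ | z ≠ 0} := isOpen_compl_singleton
  have h2 : IsOpen {z : ℂ | Real.cos δ * ‖z‖ < (Efn (-μ) * z).re} :=
    isOpen_lt (continuous_const.mul continuous_norm)
      (Complex.continuous_re.comp (continuous_const.mul continuous_id))
  exact h1.inter h2

lemma coneLe_isClosed (μ δ : ℝ) : IsClosed (coneLe μ δ) :=
  isClosed_le (continuous_const.mul continuous_norm)
    (Complex.continuous_re.comp (continuous_const.mul continuous_id))

lemma mem_coneLt {μ δ : ℝ} (hδ0 : 0 < δ) (hδπ : δ ≤ Real.pi) {r θ : ℝ}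
    (hr : 0 < r) (h1 : μ - δ < θ) (h2 : θ < μ + δ) : (r : ℂ) * Efn θ ∈ coneLt μ δ := by
  constructor
  · exact mul_ne_zero (Complex.ofReal_ne_zero.2 hr.ne') (Efn_ne_zero θ)
  · have habs : ‖(r : ℂ) * Efn θ‖ = r := by
      rw [norm_mul, Efn_abs, mul_one, Complex.norm_of_nonneg hr.le]
    have hre : (Efn (-μ) * ((r : ℂ) * Efn θ)).re = r * Real.cos (θ - μ) := by
      rw [mul_left_comm, Efn_mul]
      have h : -μ + θ = θ - μ := by ring
      rw [h, Complex.re_ofReal_mul, Efn_re]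
    rw [habs, hre]
    have hlt : |θ - μ| < δ := abs_lt.2 ⟨by linarith, by linarith⟩
    have hc : Real.cos δ < Real.cos (θ - μ) := by
      rw [← Real.cos_abs (θ - μ)]
      exact Real.strictAntiOn_cos ⟨abs_nonneg _, (hlt.trans_le hδπ).le⟩ ⟨hδ0.le, hδπ⟩ hlt
    nlinarith

lemma exists_rep {z : ℂ} (hz : z ≠ 0) (μ : ℝ) :
    ∃ φ : ℝ, -Real.pi < φ ∧ φ ≤ Real.pi ∧ z = (‖z‖ : ℂ) * Efn (μ + φ) ∧
      (Efn (-μ) * z).re = ‖z‖ * Real.cos φ := by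
  set w := Efn (-μ) * z with hw
  have hw0 : w ≠ 0 := mul_ne_zero (Efn_ne_zero _) hz
  have habs : ‖w‖ = ‖z‖ := by rw [hw, norm_mul, Efn_abs, one_mul]
  have h1 : (‖w‖ : ℂ) * Efn (Complex.arg w) = w := Complex.norm_mul_exp_arg_mul_I w
  have h2 : Efn μ * w = z := by
    rw [hw, ← mul_assoc, Efn_mul]
    have h : μ + -μ = 0 := by ring
    rw [h, Efn_zero, one_mul]
  refine ⟨Complex.arg w, Complex.neg_pi_lt_arg w, Complex.arg_le_pi w, ?_, ?_⟩
  · calc z = Efn μ * w := h2.symm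
      _ = Efn μ * ((‖w‖ : ℂ) * Efn (Complex.arg w)) := by rw [h1]
      _ = (‖z‖ : ℂ) * (Efn μ * Efn (Complex.arg w)) := by rw [habs]; ring
      _ = (‖z‖ : ℂ) * Efn (μ + Complex.arg w) := by rw [Efn_mul]
  · conv_lhs => rw [← h1]
    rw [Complex.re_ofReal_mul, Efn_re, habs]

lemma sector_eq {Ω : Set ℂ} (a b : ℝ) (h0 : a < b) (h2 : b - a ≤ 2 * Real.pi) :
    sector Ω a b = Ω ∩ coneLt ((a + b) / 2) ((b - a) / 2) := by
  ext z
  constructor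
  · rintro ⟨hzΩ, r, θ, hr, hθ1, hθ2, rfl⟩
    exact ⟨hzΩ, mem_coneLt (by linarith) (by linarith [Real.pi_pos]) hr
      (by linarith) (by linarith)⟩
  · rintro ⟨hzΩ, hz0, hlt⟩
    refine ⟨hzΩ, ?_⟩
    obtain ⟨φ, hφ1, hφ2, hrep, hre⟩ := exists_rep hz0 ((a + b) / 2)
    rw [hre] at hlt
    have habs : 0 < ‖z‖ := norm_pos_iff.mpr hz0
    have hcos : Real.cos ((b - a) / 2) < Real.cos φ := by nlinarith
    have hφπ : |φ| ≤ Real.pi := abs_le.mpr ⟨by linarith, hφ2⟩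
    have hφδ : |φ| < (b - a) / 2 := by
      by_contra hcon
      push_neg at hcon
      have hle : Real.cos φ ≤ Real.cos ((b - a) / 2) := by
        rw [← Real.cos_abs]
        rcases eq_or_lt_of_le hcon with he | hl
        · rw [← he]
        · exact le_of_lt (Real.strictAntiOn_cos ⟨by linarith, by linarith⟩
            ⟨abs_nonneg _, hφπ⟩ hl)
      linarith
    have hφδ' := abs_lt.1 hφδ
    exact ⟨‖z‖, (a + b) / 2 + φ, habs, by linarith, by linarith, hrep⟩

lemma sector_closure_subset {Ω : Set ℂ} (a b : ℝ) (h0 : a < b) (h2 : b - a ≤ 2 * Real.pi) :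
    closure (sector Ω a b) ⊆ closure Ω ∩ coneLe ((a + b) / 2) ((b - a) / 2) := by
  apply closure_minimal
  · rw [sector_eq a b h0 h2]
    exact Set.inter_subset_inter subset_closure (fun z hz => le_of_lt hz.2)
  · exact isClosed_closure.inter (coneLe_isClosed _ _)

lemma diffAt_fderiv_apply {a : ℂ → ℝ} {x : ℂ} (ha : ContDiffAt ℝ 2 a x) (v : ℂ) :
    DifferentiableAt ℝ (fun w => fderiv ℝ a w v) x :=
  ((ha.fderiv_right (by norm_num : (1 : WithTop ℕ∞) + 1 ≤ 2)).differentiableAt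
    one_ne_zero).clm_apply (differentiableAt_const v)

lemma snd_deriv {a : ℂ → ℝ} {x : ℂ} (ha : ContDiffAt ℝ 2 a x) (v w : ℂ) :
    fderiv ℝ (fun y => fderiv ℝ a y w) x v = fderiv ℝ (fderiv ℝ a) x v w := by
  rw [fderiv_clm_apply ((ha.fderiv_right (by norm_num : (1 : WithTop ℕ∞) + 1 ≤ 2)).differentiableAt
    one_ne_zero) (differentiableAt_const w)]
  simp

lemma lap_eq {a : ℂ → ℝ} {x : ℂ} (ha : ContDiffAt ℝ 2 a x) :
    lap a x = fderiv ℝ (fderiv ℝ a) x 1 1 +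
      fderiv ℝ (fderiv ℝ a) x Complex.I Complex.I := by
  simp only [lap]
  rw [snd_deriv ha, snd_deriv ha]

lemma lap_sub {a b : ℂ → ℝ} {x : ℂ} (ha : ContDiffAt ℝ 2 a x) (hb : ContDiffAt ℝ 2 b x) :
    lap (fun w => a w - b w) x = lap a x - lap b x := by
  have hev : ∀ᶠ w in nhds x, fderiv ℝ (fun y => a y - b y) w = fderiv ℝ a w - fderiv ℝ b w := by
    filter_upwards [ha.eventually (by norm_num), hb.eventually (by norm_num)] with w hwa hwb
    exact fderiv_fun_sub (hwa.differentiableAt two_ne_zero) (hwb.differentiableAt two_ne_zero)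
  have key : ∀ v : ℂ, fderiv ℝ (fun w => fderiv ℝ (fun y => a y - b y) w v) x v =
      fderiv ℝ (fun w => fderiv ℝ a w v) x v - fderiv ℝ (fun w => fderiv ℝ b w v) x v := by
    intro v
    have hev2 : (fun w => fderiv ℝ (fun y => a y - b y) w v) =ᶠ[nhds x]
        (fun w => fderiv ℝ a w v - fderiv ℝ b w v) := by
      filter_upwards [hev] with w hw
      rw [hw]; rfl
    rw [hev2.fderiv_eq, fderiv_fun_sub (diffAt_fderiv_apply ha v) (diffAt_fderiv_apply hb v)]
    rfl
  simp only [lap]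
  rw [key 1, key Complex.I]
  ring

lemma clm_decomp {F : Type*} [NormedAddCommGroup F] [NormedSpace ℝ F]
    (T : ℂ →L[ℝ] F) (v : ℂ) : T v = v.re • T 1 + v.im • T Complex.I := by
  have h : v = v.re • (1 : ℂ) + v.im • Complex.I := by
    simp [Complex.real_smul]
  calc T v = T (v.re • (1 : ℂ) + v.im • Complex.I) := by rw [← h]
    _ = v.re • T 1 + v.im • T Complex.I := by rw [map_add, T.map_smul, T.map_smul]

lemma lap_comp_reflect {u : ℂ → ℝ} (ψ : ℝ) {z : ℂ} (hu : ContDiffAt ℝ 2 u (reflect ψ z)) :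
    lap (fun w => u (reflect ψ w)) z = lap u (reflect ψ z) := by
  have hd : DifferentiableAt ℝ (fderiv ℝ u) (reflect ψ z) :=
    (hu.fderiv_right (by norm_num : (1 : WithTop ℕ∞) + 1 ≤ 2)).differentiableAt one_ne_zero
  have hc : ContinuousAt (reflect ψ) z := by
    rw [← reflectL_coe]; exact (reflectL ψ).continuous.continuousAt
  have hev : ∀ᶠ w in nhds z, ContDiffAt ℝ 2 u (reflect ψ w) :=
    hc.eventually (hu.eventually (by norm_num))
  have key : ∀ v : ℂ, fderiv ℝ (fun w => fderiv ℝ (fun y => u (reflect ψ y)) w v) z v =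
      fderiv ℝ (fderiv ℝ u) (reflect ψ z) (reflect ψ v) (reflect ψ v) := by
    intro v
    have hev1 : (fun w => fderiv ℝ (fun y => u (reflect ψ y)) w v) =ᶠ[nhds z]
        (fun w => fderiv ℝ u (reflect ψ w) (reflect ψ v)) := by
      filter_upwards [hev] with w hw
      have hcomp : fderiv ℝ (fun y => u (reflect ψ y)) w =
          (fderiv ℝ u (reflect ψ w)).comp (reflectL ψ) := by
        have h := fderiv_comp (𝕜 := ℝ) (g := u) (f := ⇑(reflectL ψ)) w
          (hw.differentiableAt two_ne_zero) (reflectL ψ).differentiableAt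
        rw [ContinuousLinearMap.fderiv] at h
        exact h
      rw [hcomp]; rfl
    rw [hev1.fderiv_eq]
    have hg : DifferentiableAt ℝ (fun y => fderiv ℝ u y (reflect ψ v)) (reflect ψ z) :=
      hd.clm_apply (differentiableAt_const _)
    have h := fderiv_comp (𝕜 := ℝ) z (g := fun y => fderiv ℝ u y (reflect ψ v))
      (f := ⇑(reflectL ψ)) hg (reflectL ψ).differentiableAt
    rw [ContinuousLinearMap.fderiv] at h
    have h2 : fderiv ℝ (fun w => fderiv ℝ u (reflect ψ w) (reflect ψ v)) z v =
        fderiv ℝ (fun y => fderiv ℝ u y (reflect ψ v)) (reflect ψ z) (reflect ψ v) := by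
      have h3 := congrArg (fun T : ℂ →L[ℝ] ℝ => T v) h
      exact h3
    rw [h2, snd_deriv hu]
  have hσ1 : reflect ψ 1 = Efn (2 * ψ) := by rw [reflect_def, map_one, mul_one]
  have hσI : reflect ψ Complex.I = -(Efn (2 * ψ) * Complex.I) := by
    rw [reflect_def, Complex.conj_I]; ring
  have hσ1re : (reflect ψ 1).re = Real.cos (2 * ψ) := by rw [hσ1, Efn_re]
  have hσ1im : (reflect ψ 1).im = Real.sin (2 * ψ) := by rw [hσ1, Efn_im]
  have hσIre : (reflect ψ Complex.I).re = Real.sin (2 * ψ) := by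
    rw [hσI]; simp [Complex.mul_I_re, Efn_im]
  have hσIim : (reflect ψ Complex.I).im = -Real.cos (2 * ψ) := by
    rw [hσI]; simp [Complex.mul_I_im, Efn_re]
  have expand : ∀ v : ℂ, fderiv ℝ (fderiv ℝ u) (reflect ψ z) v v =
      v.re * (v.re * fderiv ℝ (fderiv ℝ u) (reflect ψ z) 1 1 +
        v.im * fderiv ℝ (fderiv ℝ u) (reflect ψ z) 1 Complex.I) +
      v.im * (v.re * fderiv ℝ (fderiv ℝ u) (reflect ψ z) Complex.I 1 +
        v.im * fderiv ℝ (fderiv ℝ u) (reflect ψ z) Complex.I Complex.I) := by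
    intro v
    rw [clm_decomp (fderiv ℝ (fderiv ℝ u) (reflect ψ z)) v]
    simp only [ContinuousLinearMap.add_apply, ContinuousLinearMap.coe_smul',
      Pi.smul_apply, smul_eq_mul]
    rw [clm_decomp (fderiv ℝ (fderiv ℝ u) (reflect ψ z) 1) v,
      clm_decomp (fderiv ℝ (fderiv ℝ u) (reflect ψ z) Complex.I) v]
    simp only [smul_eq_mul]
  have hL : lap (fun w => u (reflect ψ w)) z =
      fderiv ℝ (fderiv ℝ u) (reflect ψ z) (reflect ψ 1) (reflect ψ 1) +
      fderiv ℝ (fderiv ℝ u) (reflect ψ z) (reflect ψ Complex.I) (reflect ψ Complex.I) := by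
    simp only [lap]; rw [key 1, key Complex.I]
  rw [hL, lap_eq hu]
  rw [expand (reflect ψ 1), expand (reflect ψ Complex.I), hσ1re, hσ1im, hσIre, hσIim]
  have hpy : Real.sin (2 * ψ) ^ 2 + Real.cos (2 * ψ) ^ 2 = 1 := Real.sin_sq_add_cos_sq (2 * ψ)
  linear_combination hpy * (fderiv ℝ (fderiv ℝ u) (reflect ψ z) 1 1 +
    fderiv ℝ (fderiv ℝ u) (reflect ψ z) Complex.I Complex.I)

lemma convex_tangent {g : ℝ → ℝ} (hg : ConvexOn ℝ Set.univ g) {a b g' : ℝ}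
    (hd : HasDerivAt g g' a) : g' * (b - a) ≤ g b - g a := by
  rcases lt_trichotomy a b with h | rfl | h
  · have h2 := hg.le_slope_of_hasDerivAt (Set.mem_univ a) (Set.mem_univ b) h hd
    rw [slope_def_field] at h2
    have h3 := (le_div_iff₀ (by linarith : (0 : ℝ) < b - a)).1 h2
    linarith
  · simp
  · have h2 := hg.slope_le_of_hasDerivAt (Set.mem_univ b) (Set.mem_univ a) h hd
    rw [slope_def_field] at h2
    have h3 := (div_le_iff₀ (by linarith : (0 : ℝ) < a - b)).1 h2
    nlinarith

end Statement14Aux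

/-- For `f` convex in the second variable, `w_e` satisfies the differential inequality
`-Δw_e - f'(|x|,u) w_e ≥ 0` in `S_{k,e}^+` and vanishes on `∂S_{k,e}^+`, for every
direction `e`. -/
theorem statement14
    (Ω : Set ℂ) (f f' : ℝ → ℝ → ℝ) (u : ℂ → ℝ) (k : ℕ)
    (hk : 1 ≤ k) (hΩ : BoundedRadialDomain Ω)
    (hsol : IsSolution Ω f f' u)
    (hinv : kInvariant Ω k u)
    (hconv : ∀ r : ℝ, ConvexOn ℝ Set.univ (f r)) :
    ∀ ψ : ℝ,
      (∀ z ∈ Splus Ω k ψ, 0 ≤ -lap (wfun u ψ) z - linCoeff f' u z * wfun u ψ z) ∧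
      (∀ z ∈ frontier (Splus Ω k ψ), wfun u ψ z = 0) := by
  intro ψ
  have hopen : IsOpen Ω := radial_open hΩ
  have hk0 : (0 : ℝ) < (k : ℝ) := by exact_mod_cast hk
  have hk1 : (1 : ℝ) ≤ (k : ℝ) := by exact_mod_cast hk
  have hπk : 0 < Real.pi / (k : ℝ) := div_pos Real.pi_pos hk0
  have hπk2 : Real.pi / (k : ℝ) ≤ Real.pi := div_le_self Real.pi_pos.le hk1
  have hab : ψ < ψ + Real.pi / (k : ℝ) := by linarith
  have hab2 : (ψ + Real.pi / (k : ℝ)) - ψ ≤ 2 * Real.pi := by linarith [Real.pi_pos]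
  have hSeq : Splus Ω k ψ = Ω ∩ coneLt ((ψ + (ψ + Real.pi / (k : ℝ))) / 2)
      (((ψ + Real.pi / (k : ℝ)) - ψ) / 2) := sector_eq ψ (ψ + Real.pi / (k : ℝ)) hab hab2
  set μ : ℝ := (ψ + (ψ + Real.pi / (k : ℝ))) / 2 with hμ
  set δ : ℝ := ((ψ + Real.pi / (k : ℝ)) - ψ) / 2 with hδ
  have hδ0 : 0 < δ := by rw [hδ]; linarith
  have hδπ : δ ≤ Real.pi := by rw [hδ]; linarith [Real.pi_pos]
  constructor
  · -- interior differential inequality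
    rintro z ⟨hzΩ, -⟩
    have hσΩ : reflect ψ z ∈ Ω := radial_mem hΩ (reflect_abs ψ z) hzΩ
    have hu2 : ContDiffAt ℝ 2 u z := hsol.smooth.contDiffAt (hopen.mem_nhds hzΩ)
    have huσ : ContDiffAt ℝ 2 u (reflect ψ z) := hsol.smooth.contDiffAt (hopen.mem_nhds hσΩ)
    have hcomp : ContDiffAt ℝ 2 (fun w => u (reflect ψ w)) z := by
      have h : (fun w => u (reflect ψ w)) = u ∘ ⇑(reflectL ψ) := rfl
      rw [h]
      exact huσ.comp z (reflectL ψ).contDiff.contDiffAt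
    have hwf : wfun u ψ = fun w => u (reflect ψ w) - u w := rfl
    have hlap : lap (wfun u ψ) z = lap u (reflect ψ z) - lap u z := by
      rw [hwf, lap_sub hcomp hu2, lap_comp_reflect ψ huσ]
    have hpde1 : -lap u z = f (‖z‖) (u z) := hsol.pde z hzΩ
    have hpde2 : -lap u (reflect ψ z) = f (‖z‖) (u (reflect ψ z)) := by
      have h := hsol.pde (reflect ψ z) hσΩ
      rwa [reflect_abs ψ z] at h
    have htan : f' (‖z‖) (u z) * (u (reflect ψ z) - u z) ≤
        f (‖z‖) (u (reflect ψ z)) - f (‖z‖) (u z) :=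
      convex_tangent (hconv (‖z‖)) (hsol.hasDeriv (‖z‖) (u z))
    have hlin : linCoeff f' u z = f' (‖z‖) (u z) := rfl
    have hwz : wfun u ψ z = u (reflect ψ z) - u z := rfl
    rw [hlin, hwz]
    rw [hlap] at *
    linarith
  · -- boundary vanishing
    intro z hz
    have hSopen : IsOpen (Splus Ω k ψ) := by
      rw [hSeq]; exact hopen.inter (coneLt_isOpen _ _)
    have hzcl : z ∈ closure (Splus Ω k ψ) := frontier_subset_closure hz
    have hznot : z ∉ Splus Ω k ψ := by
      intro hmem
      rw [hSopen.frontier_eq] at hz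
      exact hz.2 hmem
    have hzK : z ∈ closure Ω ∩ coneLe μ δ :=
      sector_closure_subset ψ (ψ + Real.pi / (k : ℝ)) hab hab2 hzcl
    by_cases hzΩ : z ∈ Ω
    · -- z is on one of the two bounding rays (or the origin)
      by_cases hz0 : z = 0
      · rw [hz0]
        show u (reflect ψ 0) - u 0 = 0
        rw [reflect_zero, sub_self]
      · have hnlt : z ∉ coneLt μ δ := by
          intro hlt
          exact hznot (by rw [hSeq]; exact ⟨hzΩ, hlt⟩)
        have hle : Real.cos δ * ‖z‖ ≤ (Efn (-μ) * z).re := hzK.2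
        obtain ⟨φ, hφ1, hφ2, hrep, hre⟩ := exists_rep hz0 μ
        have habs : 0 < ‖z‖ := norm_pos_iff.mpr hz0
        have hnotlt : ¬ Real.cos δ * ‖z‖ < (Efn (-μ) * z).re := by
          intro h; exact hnlt ⟨hz0, h⟩
        have heq : Real.cos φ = Real.cos δ := by
          rw [hre] at hle hnotlt
          nlinarith
        have hφπ : |φ| ≤ Real.pi := abs_le.mpr ⟨by linarith, hφ2⟩
        have habsφ : |φ| = δ := by
          apply Real.injOn_cos ⟨abs_nonneg _, hφπ⟩ ⟨hδ0.le, hδπ⟩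
          rw [Real.cos_abs, heq]
        rcases abs_eq hδ0.le |>.1 habsφ with hφδ | hφδ
        · -- φ = δ : the ray θ = ψ + π/k, use k-invariance
          have hθ : μ + φ = ψ + Real.pi / (k : ℝ) := by rw [hφδ, hμ, hδ]; ring
          rw [hθ] at hrep
          have hσz : reflect ψ z = (‖z‖ : ℂ) * Efn (ψ - Real.pi / (k : ℝ)) := by
            conv_lhs => rw [hrep]
            rw [reflect_coe]
            have h : 2 * ψ - (ψ + Real.pi / (k : ℝ)) = ψ - Real.pi / (k : ℝ) := by ring
            rw [h]
          have hσΩ : reflect ψ z ∈ Ω := radial_mem hΩ (reflect_abs ψ z) hzΩ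
          have hrot : rot (2 * Real.pi / (k : ℝ)) (reflect ψ z) = z := by
            rw [rot_def, hσz, mul_left_comm, Efn_mul]
            have h : 2 * Real.pi / (k : ℝ) + (ψ - Real.pi / (k : ℝ)) =
                ψ + Real.pi / (k : ℝ) := by ring
            rw [h, ← hrep]
          have hinv' := hinv (reflect ψ z) hσΩ
          rw [hrot] at hinv'
          show u (reflect ψ z) - u z = 0
          rw [← hinv', sub_self]
        · -- φ = -δ : the ray θ = ψ, fixed by the reflection
          have hθ : μ + φ = ψ := by rw [hφδ, hμ, hδ]; ring
          rw [hθ] at hrep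
          have hσz : reflect ψ z = z := by
            conv_lhs => rw [hrep]
            rw [reflect_coe]
            have h : 2 * ψ - ψ = ψ := by ring
            rw [h]
            exact hrep.symm
          show u (reflect ψ z) - u z = 0
          rw [hσz, sub_self]
    · -- z lies on the boundary of Ω
      have hzfr : z ∈ frontier Ω := by
        rw [frontier, hopen.interior_eq]
        exact ⟨hzK.1, hzΩ⟩
      have hpre : (reflectHomeo ψ) ⁻¹' Ω = Ω := by
        ext w
        constructor
        · intro h
          exact radial_mem hΩ (reflect_abs ψ w).symm h
        · intro h
          exact radial_mem hΩ (reflect_abs ψ w) h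
      have hfr := (reflectHomeo ψ).preimage_frontier Ω
      rw [hpre] at hfr
      have hσfr : reflect ψ z ∈ frontier Ω := by
        have h : z ∈ (reflectHomeo ψ) ⁻¹' (frontier Ω) := by rw [hfr]; exact hzfr
        exact h
      show u (reflect ψ z) - u z = 0
      rw [hsol.bc _ hσfr, hsol.bc _ hzfr, sub_self]
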